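/- Let J1 ⊂ ℂ[x0,...,x8] be the ideal generated by the monomials x_i x_{i+2} (i ∈ ℤ/9), x_i x_{i+3} x_{i+6} (i ∈ ℤ/9), and x_{i+3} x_{i+7} x_{i+8} (i ∈ ℤ/9), indices mod 9. Then for every integer n ≥ 1, the dimension over ℂ of the degree-n homogeneous component of the graded quotient ring ℂ[x0,...,x8]/J1 equals 9n^2. (J1 is the Stanley–Reisner face ideal of a triangulation Δ_9 of the torus with 9 vertices, 27 edges and 18 triangles, and 9n^2 is the Hilbert polynomial of a (1,9)-polarized abelian surface in P^8.) -/

import Mathlib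

open MvPolynomial

set_option maxRecDepth 100000
set_option maxHeartbeats 1000000

/-- The Stanley–Reisner ideal `J₁ ⊂ ℂ[x0,…,x8]` of the triangulation `Δ₉` of the torus,
generated by `x_i x_{i+2}`, `x_i x_{i+3} x_{i+6}` and `x_{i+3} x_{i+7} x_{i+8}`
(indices mod 9). -/
noncomputable def idealJ1 : Ideal (MvPolynomial (Fin 9) ℂ) :=
  Ideal.span
    ((Set.range fun i : Fin 9 => X i * X (i + 2)) ∪
     (Set.range fun i : Fin 9 => X i * X (i + 3) * X (i + 6)) ∪
     (Set.range fun i : Fin 9 => X (i + 3) * X (i + 7) * X (i + 8)))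


namespace TorusHilbert

open Finset

lemma card_finsuppAntidiag {ι : Type*} [DecidableEq ι] (s : Finset ι) (m : ℕ) :
    (Finset.finsuppAntidiag s m).card = Nat.multichoose s.card m := by
  classical
  rw [← Fintype.card_coe s, ← Sym.card_sym_eq_multichoose, Fintype.card]
  refine (Finset.card_bij
    (fun (σ : Sym ↥s m) _ => Multiset.toFinsupp (σ.1.map Subtype.val)) ?_ ?_ ?_).symm
  · intro σ _
    have hsupp : (Multiset.toFinsupp (σ.1.map Subtype.val)).support ⊆ s := by
      rw [Multiset.toFinsupp_support]
      intro a ha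
      simp only [Multiset.mem_toFinset, Multiset.mem_map] at ha
      obtain ⟨b, _, rfl⟩ := ha
      exact b.2
    rw [Finset.mem_finsuppAntidiag]
    refine ⟨?_, hsupp⟩
    have h1 : (Multiset.toFinsupp (σ.1.map Subtype.val)).sum (fun _ c => c)
        = Multiset.card (σ.1.map Subtype.val) := Multiset.toFinsupp_sum_eq _
    rw [Multiset.card_map, σ.2] at h1
    have h2 : (Multiset.toFinsupp (σ.1.map Subtype.val)).sum (fun _ c => c)
        = ∑ i ∈ s, (Multiset.toFinsupp (σ.1.map Subtype.val)) i :=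
      Finsupp.sum_of_support_subset _ hsupp _ (fun i _ => rfl)
    exact h2.symm.trans h1
  · intro σ₁ _ σ₂ _ h
    have := Multiset.toFinsupp.injective h
    have := Multiset.map_injective Subtype.val_injective this
    exact Subtype.ext this
  · intro f hf
    rw [Finset.mem_finsuppAntidiag] at hf
    have hsub : ∀ a ∈ f.toMultiset, a ∈ s := by
      intro a ha
      rw [Finsupp.mem_toMultiset] at ha
      exact hf.2 ha
    refine ⟨⟨f.toMultiset.attach.map (fun x => ⟨x.1, hsub x.1 x.2⟩), ?_⟩, Finset.mem_univ _, ?_⟩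
    · rw [Multiset.card_map, Multiset.card_attach, Finsupp.card_toMultiset]
      rw [← hf.1]
      exact Finsupp.sum_of_support_subset _ hf.2 _ (fun i _ => rfl)
    · simp only [Multiset.map_map, Function.comp]
      rw [Multiset.attach_map_val, Finsupp.toMultiset_toFinsupp]
open Finset

-- indicator finsupp of a finset
noncomputable def indF {ι : Type*} [DecidableEq ι] (F : Finset ι) : ι →₀ ℕ :=
  ∑ i ∈ F, Finsupp.single i 1

lemma indF_apply {ι : Type*} [DecidableEq ι] (F : Finset ι) (j : ι) :
    indF F j = if j ∈ F then 1 else 0 := by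
  classical
  rw [indF, Finset.sum_apply']
  simp [Finsupp.single_apply]

lemma card_fiber {ι : Type*} [DecidableEq ι] [Fintype ι] (n : ℕ) (hn : 1 ≤ n)
    (F : Finset ι) (hF : F.Nonempty) :
    ((Finset.finsuppAntidiag (univ : Finset ι) n).filter fun m => m.support = F).card
      = (n - 1).choose (F.card - 1) := by
  classical
  have hF1 : 1 ≤ F.card := Finset.card_pos.mpr hF
  by_cases hcard : F.card ≤ n
  · have key : ((Finset.finsuppAntidiag (univ : Finset ι) n).filter
        fun m => m.support = F).card = (Finset.finsuppAntidiag F (n - F.card)).card := by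
      refine Finset.card_bij' (fun m _ => m - indF F) (fun b _ => b + indF F) ?_ ?_ ?_ ?_
      · intro m hm
        rw [Finset.mem_filter, Finset.mem_finsuppAntidiag] at hm
        obtain ⟨⟨hsum, -⟩, hsupp⟩ := hm
        have hge : ∀ j ∈ F, 1 ≤ m j := by
          intro j hj
          rw [← hsupp] at hj
          exact Nat.one_le_iff_ne_zero.mpr (Finsupp.mem_support_iff.mp hj)
        rw [Finset.mem_finsuppAntidiag]
        constructor
        · have : ∀ j ∈ F, (m - indF F) j = m j - 1 := by
            intro j hj
            rw [Finsupp.tsub_apply, indF_apply, if_pos hj]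
          rw [Finset.sum_congr rfl this, Finset.sum_tsub_distrib F hge]
          have hmF : ∑ j ∈ F, m j = n := by
            rw [← hsum]
            exact Finset.sum_subset (Finset.subset_univ F) (fun x _ hx => by
              rw [← hsupp] at hx
              exact Finsupp.notMem_support_iff.mp hx)
          rw [hmF, Finset.sum_const, smul_eq_mul, mul_one]
        · intro j hj
          rw [Finsupp.mem_support_iff, Finsupp.tsub_apply] at hj
          by_contra hjF
          apply hj
          have : m j = 0 := by
            rw [← hsupp] at hjF; exact Finsupp.notMem_support_iff.mp hjF
          simp [this]
      · intro b hb
        rw [Finset.mem_finsuppAntidiag] at hb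
        obtain ⟨hsum, hsupp⟩ := hb
        have happ : ∀ j, (b + indF F) j = b j + (if j ∈ F then 1 else 0) := by
          intro j; rw [Finsupp.add_apply, indF_apply]
        rw [Finset.mem_filter, Finset.mem_finsuppAntidiag]
        have hsupport : (b + indF F).support = F := by
          ext j
          rw [Finsupp.mem_support_iff, happ]
          constructor
          · intro h
            by_contra hjF
            apply h
            have : b j = 0 := Finsupp.notMem_support_iff.mp (fun hc => hjF (hsupp hc))
            simp [this, hjF]
          · intro h; simp [h]
        refine ⟨⟨?_, by rw [hsupport]; exact Finset.subset_univ F⟩, hsupport⟩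
        rw [Finset.sum_congr rfl (fun j _ => happ j), Finset.sum_add_distrib]
        have h1 : ∑ j ∈ (univ : Finset ι), b j = n - F.card := by
          rw [← hsum]
          refine (Finset.sum_subset (Finset.subset_univ F) ?_).symm
          intro x _ hx
          exact Finsupp.notMem_support_iff.mp (fun hc => hx (hsupp hc))
        have h2 : (∑ j ∈ (univ : Finset ι), if j ∈ F then 1 else 0) = F.card := by
          simp [Finset.sum_ite_mem]
        rw [h1, h2]
        omega
      · intro m hm
        rw [Finset.mem_filter] at hm
        have hle : indF F ≤ m := by
          rw [Finsupp.le_def]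
          intro j
          rw [indF_apply]
          split
          · next hj =>
            rw [← hm.2] at hj
            exact Nat.one_le_iff_ne_zero.mpr (Finsupp.mem_support_iff.mp hj)
          · exact Nat.zero_le _
        exact tsub_add_cancel_of_le hle
      · intro b _
        exact add_tsub_cancel_right b (indF F)
    rw [key, card_finsuppAntidiag, Nat.multichoose_eq]
    have h3 : F.card + (n - F.card) - 1 = n - 1 := by omega
    rw [h3]
    have h4 : n - F.card = (n - 1) - (F.card - 1) := by omega
    rw [h4, Nat.choose_symm (by omega)]
  · have hempty : ((Finset.finsuppAntidiag (univ : Finset ι) n).filter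
        fun m => m.support = F) = ∅ := by
      rw [Finset.filter_eq_empty_iff]
      intro m hm
      rw [Finset.mem_finsuppAntidiag] at hm
      intro hsupp
      have h5 : ∑ j ∈ F, 1 ≤ ∑ j ∈ F, m j := by
        refine Finset.sum_le_sum ?_
        intro j hj
        rw [← hsupp] at hj
        exact Nat.one_le_iff_ne_zero.mpr (Finsupp.mem_support_iff.mp hj)
      have hmF : ∑ j ∈ F, m j ≤ n := by
        rw [← hm.1]
        exact Finset.sum_le_sum_of_subset (Finset.subset_univ F)
      simp only [Finset.sum_const, smul_eq_mul, mul_one] at h5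
      omega
    rw [hempty, Finset.card_empty]
    exact (Nat.choose_eq_zero_of_lt (by omega)).symm

open Finset



/-- The "no bad subset" condition on a predicate over `Fin 9`. -/
def QF (q : Fin 9 → Prop) : Prop :=
  (∀ i : Fin 9, ¬(q i ∧ q (i+2))) ∧
  (∀ i : Fin 9, ¬(q i ∧ q (i+3) ∧ q (i+6))) ∧
  (∀ i : Fin 9, ¬(q (i+3) ∧ q (i+7) ∧ q (i+8)))

instance QF_decidable (q : Fin 9 → Prop) [DecidablePred q] : Decidable (QF q) := by
  unfold QF; infer_instance

/-- Standardness of an exponent vector. -/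
def Pm (m : Fin 9 →₀ ℕ) : Prop := QF (fun j => 1 ≤ m j)

instance : DecidablePred Pm := fun m => by unfold Pm; infer_instance

lemma QF_congr {q q' : Fin 9 → Prop} (h : ∀ j, q j ↔ q' j) (hq : QF q) : QF q' := by
  obtain ⟨h1, h2, h3⟩ := hq
  refine ⟨fun i hi => h1 i ?_, fun i hi => h2 i ?_, fun i hi => h3 i ?_⟩ <;>
    simp only [h] <;> exact hi

/-- The 54 nonempty faces of the triangulation. -/
def faces : Finset (Finset (Fin 9)) :=
  ((univ : Finset (Fin 9)).image fun i => ({i} : Finset (Fin 9))) ∪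
  ((univ : Finset (Fin 9)).image fun i => ({i, i+1} : Finset (Fin 9))) ∪
  ((univ : Finset (Fin 9)).image fun i => ({i, i+3} : Finset (Fin 9))) ∪
  ((univ : Finset (Fin 9)).image fun i => ({i, i+4} : Finset (Fin 9))) ∪
  ((univ : Finset (Fin 9)).image fun i => ({i, i+1, i+4} : Finset (Fin 9))) ∪
  ((univ : Finset (Fin 9)).image fun i => ({i, i+3, i+4} : Finset (Fin 9)))

lemma mem_faces_iff (F : Finset (Fin 9)) : F ∈ faces ↔ ∃ i : Fin 9,
    F = {i} ∨ F = {i,i+1} ∨ F = {i,i+3} ∨ F = {i,i+4} ∨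
    F = {i,i+1,i+4} ∨ F = {i,i+3,i+4} := by
  simp only [faces, Finset.mem_union, Finset.mem_image, Finset.mem_univ, true_and]
  constructor
  · rintro (((((⟨i, rfl⟩|⟨i, rfl⟩)|⟨i, rfl⟩)|⟨i, rfl⟩)|⟨i, rfl⟩)|⟨i, rfl⟩) <;>
      exact ⟨i, by tauto⟩
  · rintro ⟨i, (rfl|rfl|rfl|rfl|rfl|rfl)⟩ <;> [skip; skip; skip; skip; skip; skip] <;>
      first
      | (exact Or.inl (Or.inl (Or.inl (Or.inl (Or.inl ⟨i, rfl⟩)))))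
      | (exact Or.inl (Or.inl (Or.inl (Or.inl (Or.inr ⟨i, rfl⟩)))))
      | (exact Or.inl (Or.inl (Or.inl (Or.inr ⟨i, rfl⟩))))
      | (exact Or.inl (Or.inl (Or.inr ⟨i, rfl⟩)))
      | (exact Or.inl (Or.inr ⟨i, rfl⟩))
      | (exact Or.inr ⟨i, rfl⟩)

/-- Boolean classification of standard supports, checked by `decide`. -/
theorem classify_bool : ∀ g : Fin 9 → Bool,
    (∃ i, g i = true) →
    (∀ i : Fin 9, ¬(g i = true ∧ g (i+2) = true)) →
    (∀ i : Fin 9, ¬(g i = true ∧ g (i+3) = true ∧ g (i+6) = true)) →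
    (∀ i : Fin 9, ¬(g (i+3) = true ∧ g (i+7) = true ∧ g (i+8) = true)) →
    ∃ i : Fin 9,
      (∀ j, g j = true ↔ j = i) ∨
      (∀ j, g j = true ↔ (j = i ∨ j = i+1)) ∨
      (∀ j, g j = true ↔ (j = i ∨ j = i+3)) ∨
      (∀ j, g j = true ↔ (j = i ∨ j = i+4)) ∨
      (∀ j, g j = true ↔ (j = i ∨ j = i+1 ∨ j = i+4)) ∨
      (∀ j, g j = true ↔ (j = i ∨ j = i+3 ∨ j = i+4)) := by decide

/-- Each face shape satisfies the condition `QF`. -/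
lemma shape_QF : ∀ i : Fin 9,
    QF (fun j => j = i) ∧
    QF (fun j => j = i ∨ j = i+1) ∧
    QF (fun j => j = i ∨ j = i+3) ∧
    QF (fun j => j = i ∨ j = i+4) ∧
    QF (fun j => j = i ∨ j = i+1 ∨ j = i+4) ∧
    QF (fun j => j = i ∨ j = i+3 ∨ j = i+4) := by decide

lemma faces_card : ∀ F ∈ faces, F.card ∈ ({1,2,3} : Finset ℕ) := by decide
lemma faces_card1 : (faces.filter fun F => F.card = 1).card = 9 := by decide
lemma faces_card2 : (faces.filter fun F => F.card = 2).card = 27 := by decide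
lemma faces_card3 : (faces.filter fun F => F.card = 3).card = 18 := by decide

end TorusHilbert

namespace TorusHilbert
open Finset

theorem count_standard (n : ℕ) (hn : 1 ≤ n) :
    ((Finset.finsuppAntidiag (univ : Finset (Fin 9)) n).filter fun m => Pm m).card
      = 9 * n ^ 2 := by
  classical
  set S := (Finset.finsuppAntidiag (univ : Finset (Fin 9)) n).filter (fun m => Pm m) with hS
  have hmaps : ∀ m ∈ S, m.support ∈ faces := by
    intro m hm
    rw [hS, Finset.mem_filter, Finset.mem_finsuppAntidiag] at hm
    obtain ⟨⟨hsum, -⟩, hPm⟩ := hm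
    have hex : ∃ j, (fun j => decide (1 ≤ m j)) j = true := by
      by_contra hc
      push_neg at hc
      have hz : ∀ j, m j = 0 := by
        intro j
        have h1 : ¬ (1 ≤ m j) := by simpa using hc j
        omega
      rw [Finset.sum_congr rfl (fun j _ => hz j), Finset.sum_const_zero] at hsum
      omega
    obtain ⟨hP1, hP2, hP3⟩ := hPm
    obtain ⟨i, hcase⟩ := classify_bool (fun j => decide (1 ≤ m j)) hex
      (fun i hi => hP1 i (by simpa using hi)) (fun i hi => hP2 i (by simpa using hi))
      (fun i hi => hP3 i (by simpa using hi))
    have hsupp : ∀ (q : Fin 9 → Prop) (F : Finset (Fin 9)),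
        (∀ j, decide (1 ≤ m j) = true ↔ q j) → (∀ j, j ∈ F ↔ q j) → m.support = F := by
      intro q F h1 h2
      ext j
      rw [Finsupp.mem_support_iff, h2, ← h1 j]
      simp [Nat.one_le_iff_ne_zero]
    rw [mem_faces_iff]
    refine ⟨i, ?_⟩
    rcases hcase with h|h|h|h|h|h
    · exact Or.inl (hsupp _ _ h (fun j => by simp))
    · exact Or.inr (Or.inl (hsupp _ _ h (fun j => by simp)))
    · exact Or.inr (Or.inr (Or.inl (hsupp _ _ h (fun j => by simp))))
    · exact Or.inr (Or.inr (Or.inr (Or.inl (hsupp _ _ h (fun j => by simp)))))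
    · exact Or.inr (Or.inr (Or.inr (Or.inr (Or.inl (hsupp _ _ h (fun j => by simp))))))
    · exact Or.inr (Or.inr (Or.inr (Or.inr (Or.inr (hsupp _ _ h (fun j => by simp))))))
  rw [Finset.card_eq_sum_card_fiberwise hmaps]
  have hfiber : ∀ F ∈ faces,
      (S.filter fun m => m.support = F).card = (n-1).choose (F.card - 1) := by
    intro F hF
    obtain ⟨i, hshape⟩ := (mem_faces_iff F).mp hF
    have hQF : QF (fun j => j ∈ F) := by
      obtain ⟨q1,q2,q3,q4,q5,q6⟩ := shape_QF i
      rcases hshape with rfl|rfl|rfl|rfl|rfl|rfl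
      · exact QF_congr (fun j => by simp) q1
      · exact QF_congr (fun j => by simp) q2
      · exact QF_congr (fun j => by simp) q3
      · exact QF_congr (fun j => by simp) q4
      · exact QF_congr (fun j => by simp) q5
      · exact QF_congr (fun j => by simp) q6
    have hne : F.Nonempty := by
      rcases hshape with rfl|rfl|rfl|rfl|rfl|rfl <;> exact ⟨i, by simp⟩
    have heq : S.filter (fun m => m.support = F)
        = (Finset.finsuppAntidiag (univ : Finset (Fin 9)) n).filter
            (fun m => m.support = F) := by
      rw [hS, Finset.filter_filter]
      apply Finset.filter_congr
      intro m _
      constructor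
      · rintro ⟨-, h⟩; exact h
      · intro h
        refine ⟨?_, h⟩
        refine QF_congr (fun j => ?_) hQF
        rw [← h, Finsupp.mem_support_iff]
        exact ⟨fun h0 => Nat.one_le_iff_ne_zero.mpr h0, fun h1 => Nat.one_le_iff_ne_zero.mp h1⟩
    rw [heq, card_fiber n hn F hne]
  rw [Finset.sum_congr rfl hfiber]
  have hsum := Finset.sum_fiberwise_eq_sum_filter faces ({1,2,3} : Finset ℕ) Finset.card
      (fun F => (n-1).choose (F.card - 1))
  rw [Finset.filter_true_of_mem faces_card] at hsum
  rw [← hsum]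
  have inner : ∀ k ∈ ({1,2,3} : Finset ℕ),
      (∑ F ∈ faces.filter (fun F => F.card = k), (n-1).choose (F.card - 1))
        = (faces.filter (fun F => F.card = k)).card * (n-1).choose (k-1) := by
    intro k _
    rw [Finset.sum_congr rfl (fun F hF => by rw [(Finset.mem_filter.mp hF).2]),
      Finset.sum_const, smul_eq_mul]
  rw [Finset.sum_congr rfl inner]
  rw [show ({1,2,3} : Finset ℕ) = insert 1 (insert 2 {3}) from rfl]
  rw [Finset.sum_insert (by decide), Finset.sum_insert (by decide), Finset.sum_singleton]
  rw [faces_card1, faces_card2, faces_card3]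
  obtain ⟨m, rfl⟩ : ∃ m, n = m + 1 := ⟨n - 1, by omega⟩
  simp only [Nat.add_sub_cancel]
  rcases m with _|k
  · norm_num
  · rw [Nat.choose_zero_right, Nat.choose_one_right, Nat.choose_two_right]
    have h18 : 18 * ((k+1) * ((k+1)-1) / 2) = 9 * ((k+1) * k) := by
      have hdvd : 2 ∣ (k+1) * k := by
        rw [mul_comm]
        exact (Nat.even_mul_succ_self k).two_dvd
      simp only [Nat.add_sub_cancel]
      rw [show (18:ℕ) = 9 * 2 by rfl, mul_assoc, Nat.mul_div_cancel' hdvd]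
    rw [h18]
    ring


noncomputable def e1 (i : Fin 9) : Fin 9 →₀ ℕ := Finsupp.single i 1 + Finsupp.single (i+2) 1
noncomputable def e2 (i : Fin 9) : Fin 9 →₀ ℕ :=
  Finsupp.single i 1 + Finsupp.single (i+3) 1 + Finsupp.single (i+6) 1
noncomputable def e3 (i : Fin 9) : Fin 9 →₀ ℕ :=
  Finsupp.single (i+3) 1 + Finsupp.single (i+7) 1 + Finsupp.single (i+8) 1

lemma fin_ne : ∀ i : Fin 9, i ≠ i+2 ∧ i ≠ i+3 ∧ i ≠ i+6 ∧ (i+3) ≠ i+6 ∧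
    (i+3) ≠ i+7 ∧ (i+3) ≠ i+8 ∧ (i+7) ≠ i+8 := by decide

lemma pair_le_iff {a b : Fin 9} (hab : a ≠ b) (m : Fin 9 →₀ ℕ) :
    Finsupp.single a 1 + Finsupp.single b 1 ≤ m ↔ 1 ≤ m a ∧ 1 ≤ m b := by
  constructor
  · intro h
    have ha := Finsupp.le_def.mp h a
    have hb := Finsupp.le_def.mp h b
    rw [Finsupp.add_apply, Finsupp.single_apply, Finsupp.single_apply] at ha hb
    rw [if_pos rfl, if_neg (fun hc => hab hc.symm)] at ha
    rw [if_neg hab, if_pos rfl] at hb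
    omega
  · rintro ⟨h1, h2⟩
    rw [Finsupp.le_def]
    intro j
    rw [Finsupp.add_apply, Finsupp.single_apply, Finsupp.single_apply]
    by_cases hja : a = j
    · cases hja
      rw [if_pos rfl, if_neg (fun hc => hab hc.symm)]
      omega
    · rw [if_neg hja]
      by_cases hjb : b = j
      · cases hjb
        rw [if_pos rfl]
        omega
      · rw [if_neg hjb]
        omega

lemma triple_le_iff {a b c : Fin 9} (hab : a ≠ b) (hac : a ≠ c) (hbc : b ≠ c)
    (m : Fin 9 →₀ ℕ) :
    Finsupp.single a 1 + Finsupp.single b 1 + Finsupp.single c 1 ≤ m ↔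
      1 ≤ m a ∧ 1 ≤ m b ∧ 1 ≤ m c := by
  constructor
  · intro h
    have ha := Finsupp.le_def.mp h a
    have hb := Finsupp.le_def.mp h b
    have hc := Finsupp.le_def.mp h c
    rw [Finsupp.add_apply, Finsupp.add_apply, Finsupp.single_apply, Finsupp.single_apply,
      Finsupp.single_apply] at ha hb hc
    rw [if_pos rfl, if_neg (fun h' => hab h'.symm), if_neg (fun h' => hac h'.symm)] at ha
    rw [if_neg hab, if_pos rfl, if_neg (fun h' => hbc h'.symm)] at hb
    rw [if_neg hac, if_neg hbc, if_pos rfl] at hc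
    omega
  · rintro ⟨h1, h2, h3⟩
    rw [Finsupp.le_def]
    intro j
    rw [Finsupp.add_apply, Finsupp.add_apply, Finsupp.single_apply, Finsupp.single_apply,
      Finsupp.single_apply]
    by_cases hja : a = j
    · cases hja
      rw [if_pos rfl, if_neg (fun h' => hab h'.symm), if_neg (fun h' => hac h'.symm)]
      omega
    · rw [if_neg hja]
      by_cases hjb : b = j
      · cases hjb
        rw [if_pos rfl, if_neg (fun h' => hbc h'.symm)]
        omega
      · rw [if_neg hjb]
        by_cases hjc : c = j
        · cases hjc
          rw [if_pos rfl]
          omega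
        · rw [if_neg hjc]
          omega

/-- Divisibility by some generator. -/
def Gle (m : Fin 9 →₀ ℕ) : Prop := ∃ i : Fin 9, e1 i ≤ m ∨ e2 i ≤ m ∨ e3 i ≤ m

lemma e1_le_iff (i : Fin 9) (m : Fin 9 →₀ ℕ) :
    e1 i ≤ m ↔ 1 ≤ m i ∧ 1 ≤ m (i+2) := pair_le_iff (fin_ne i).1 m

lemma e2_le_iff (i : Fin 9) (m : Fin 9 →₀ ℕ) :
    e2 i ≤ m ↔ 1 ≤ m i ∧ 1 ≤ m (i+3) ∧ 1 ≤ m (i+6) :=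
  triple_le_iff (fin_ne i).2.1 (fin_ne i).2.2.1 (fin_ne i).2.2.2.1 m

lemma e3_le_iff (i : Fin 9) (m : Fin 9 →₀ ℕ) :
    e3 i ≤ m ↔ 1 ≤ m (i+3) ∧ 1 ≤ m (i+7) ∧ 1 ≤ m (i+8) :=
  triple_le_iff (fin_ne i).2.2.2.2.1 (fin_ne i).2.2.2.2.2.1 (fin_ne i).2.2.2.2.2.2 m

lemma not_Pm_iff (m : Fin 9 →₀ ℕ) : ¬ Pm m ↔ Gle m := by
  constructor
  · intro h
    by_contra hg
    apply h
    refine ⟨fun i hi => ?_, fun i hi => ?_, fun i hi => ?_⟩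
    · exact hg ⟨i, Or.inl ((e1_le_iff i m).mpr hi)⟩
    · exact hg ⟨i, Or.inr (Or.inl ((e2_le_iff i m).mpr hi))⟩
    · exact hg ⟨i, Or.inr (Or.inr ((e3_le_iff i m).mpr hi))⟩
  · rintro ⟨i, h|h|h⟩ hPm
    · exact hPm.1 i ((e1_le_iff i m).mp h)
    · exact hPm.2.1 i ((e2_le_iff i m).mp h)
    · exact hPm.2.2 i ((e3_le_iff i m).mp h)

lemma gen1_eq (i : Fin 9) : (X i * X (i + 2) : MvPolynomial (Fin 9) ℂ)
    = monomial (e1 i) 1 := by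
  show monomial (Finsupp.single i 1) 1 * monomial (Finsupp.single (i+2) 1) 1 = _
  rw [monomial_mul, one_mul]
  rfl

lemma gen2_eq (i : Fin 9) : (X i * X (i + 3) * X (i + 6) : MvPolynomial (Fin 9) ℂ)
    = monomial (e2 i) 1 := by
  show monomial (Finsupp.single i 1) 1 * monomial (Finsupp.single (i+3) 1) 1
    * monomial (Finsupp.single (i+6) 1) 1 = _
  rw [monomial_mul, monomial_mul, one_mul, one_mul]
  rfl

lemma gen3_eq (i : Fin 9) : (X (i + 3) * X (i + 7) * X (i + 8) : MvPolynomial (Fin 9) ℂ)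
    = monomial (e3 i) 1 := by
  show monomial (Finsupp.single (i+3) 1) 1 * monomial (Finsupp.single (i+7) 1) 1
    * monomial (Finsupp.single (i+8) 1) 1 = _
  rw [monomial_mul, monomial_mul, one_mul, one_mul]
  rfl

lemma genMon_mem (i : Fin 9) :
    (monomial (e1 i) (1:ℂ)) ∈ idealJ1 ∧ (monomial (e2 i) (1:ℂ)) ∈ idealJ1 ∧
      (monomial (e3 i) (1:ℂ)) ∈ idealJ1 := by
  refine ⟨?_, ?_, ?_⟩ <;> apply Ideal.subset_span
  · exact Set.mem_union_left _ (Set.mem_union_left _ ⟨i, gen1_eq i⟩)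
  · exact Set.mem_union_left _ (Set.mem_union_right _ ⟨i, gen2_eq i⟩)
  · exact Set.mem_union_right _ ⟨i, gen3_eq i⟩

lemma monomial_mem_of_Gle {m : Fin 9 →₀ ℕ} (h : Gle m) (c : ℂ) :
    monomial m c ∈ idealJ1 := by
  obtain ⟨i, h|h|h⟩ := h
  · have heq : monomial m c = monomial (m - e1 i) c * monomial (e1 i) 1 := by
      rw [monomial_mul, mul_one, tsub_add_cancel_of_le h]
    rw [heq]
    exact Ideal.mul_mem_left _ _ (genMon_mem i).1
  · have heq : monomial m c = monomial (m - e2 i) c * monomial (e2 i) 1 := by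
      rw [monomial_mul, mul_one, tsub_add_cancel_of_le h]
    rw [heq]
    exact Ideal.mul_mem_left _ _ (genMon_mem i).2.1
  · have heq : monomial m c = monomial (m - e3 i) c * monomial (e3 i) 1 := by
      rw [monomial_mul, mul_one, tsub_add_cancel_of_le h]
    rw [heq]
    exact Ideal.mul_mem_left _ _ (genMon_mem i).2.2

lemma support_Gle {p : MvPolynomial (Fin 9) ℂ} (hp : p ∈ idealJ1) :
    ∀ m ∈ p.support, Gle m := by
  refine Submodule.span_induction (p := fun x _ => ∀ m ∈ x.support, Gle m)
    ?_ ?_ ?_ ?_ hp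
  · rintro x ((⟨i, rfl⟩|⟨i, rfl⟩)|⟨i, rfl⟩) m hm
    · replace hm : m ∈ (X i * X (i + 2) : MvPolynomial (Fin 9) ℂ).support := hm
      rw [gen1_eq, support_monomial, if_neg one_ne_zero] at hm
      rw [Finset.mem_singleton] at hm
      exact ⟨i, Or.inl (hm ▸ le_rfl)⟩
    · replace hm : m ∈ (X i * X (i + 3) * X (i + 6) : MvPolynomial (Fin 9) ℂ).support := hm
      rw [gen2_eq, support_monomial, if_neg one_ne_zero] at hm
      rw [Finset.mem_singleton] at hm
      exact ⟨i, Or.inr (Or.inl (hm ▸ le_rfl))⟩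
    · replace hm : m ∈ (X (i + 3) * X (i + 7) * X (i + 8) : MvPolynomial (Fin 9) ℂ).support := hm
      rw [gen3_eq, support_monomial, if_neg one_ne_zero] at hm
      rw [Finset.mem_singleton] at hm
      exact ⟨i, Or.inr (Or.inr (hm ▸ le_rfl))⟩
  · intro m hm
    simp at hm
  · intro x y _ _ hx hy m hm
    rcases Finset.mem_union.mp (MvPolynomial.support_add hm) with h | h
    · exact hx m h
    · exact hy m h
  · intro a x _ hx m hm
    rw [smul_eq_mul] at hm
    have := MvPolynomial.support_mul a x hm
    rw [Finset.mem_add] at this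
    obtain ⟨u, _, v, hv, huv⟩ := this
    obtain ⟨i, h⟩ := hx v hv
    refine ⟨i, ?_⟩
    have hle : v ≤ m := huv ▸ le_add_self
    rcases h with h|h|h
    · exact Or.inl (h.trans hle)
    · exact Or.inr (Or.inl (h.trans hle))
    · exact Or.inr (Or.inr (h.trans hle))


open Finset MvPolynomial

lemma degree_eq_sum_univ (m : Fin 9 →₀ ℕ) :
    Finsupp.degree m = ∑ i : Fin 9, m i :=
  Finset.sum_subset (Finset.subset_univ _)
    (fun x _ hx => Finsupp.notMem_support_iff.mp hx)

lemma mem_V_deg {n : ℕ} {p : MvPolynomial (Fin 9) ℂ}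
    (hp : p ∈ homogeneousSubmodule (Fin 9) ℂ n) :
    ∀ m ∈ p.support, ∑ i : Fin 9, m i = n := by
  intro m hm
  have h1 := (mem_homogeneousSubmodule n p).mp hp (MvPolynomial.mem_support_iff.mp hm)
  rw [← h1, ← degree_eq_sum_univ, Finsupp.degree_eq_weight_one]
  rfl


end TorusHilbert

open Finset TorusHilbert


theorem hilbert_function_J1 (n : ℕ) (hn : 1 ≤ n) :
    Module.finrank ℂ
      ((homogeneousSubmodule (Fin 9) ℂ n) ⧸
        (Submodule.comap (homogeneousSubmodule (Fin 9) ℂ n).subtype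
          (Submodule.restrictScalars ℂ idealJ1))) = 9 * n ^ 2 := by
  classical
  set S : Finset (Fin 9 →₀ ℕ) :=
    (Finset.finsuppAntidiag (univ : Finset (Fin 9)) n).filter (fun m => Pm m) with hSdef
  set V : Submodule ℂ (MvPolynomial (Fin 9) ℂ) := homogeneousSubmodule (Fin 9) ℂ n with hV
  set K : Submodule ℂ V := Submodule.comap V.subtype (Submodule.restrictScalars ℂ idealJ1)
    with hK
  have hSmem : ∀ m : Fin 9 →₀ ℕ, m ∈ S ↔ (∑ i : Fin 9, m i = n ∧ Pm m) := by
    intro m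
    rw [hSdef, Finset.mem_filter, Finset.mem_finsuppAntidiag]
    constructor
    · rintro ⟨⟨h1, -⟩, h2⟩; exact ⟨h1, h2⟩
    · rintro ⟨h1, h2⟩; exact ⟨⟨h1, Finset.subset_univ _⟩, h2⟩
  let φ : V →ₗ[ℂ] (↥S → ℂ) :=
    LinearMap.pi (fun s => (lcoeff ℂ (s : Fin 9 →₀ ℕ)).comp V.subtype)
  have hφ_apply : ∀ (x : V) (s : ↥S), φ x s = coeff (s : Fin 9 →₀ ℕ) (x : MvPolynomial (Fin 9) ℂ) := by
    intro x s
    rfl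
  have hker : LinearMap.ker φ = K := by
    ext x
    rw [LinearMap.mem_ker, hK, Submodule.mem_comap, Submodule.restrictScalars_mem,
      Submodule.subtype_apply]
    constructor
    · intro h0
      have hcoeff : ∀ s : ↥S, coeff (s : Fin 9 →₀ ℕ) (x : MvPolynomial (Fin 9) ℂ) = 0 := by
        intro s
        rw [← hφ_apply x s, h0]
        rfl
      rw [← support_sum_monomial_coeff (x : MvPolynomial (Fin 9) ℂ)]
      refine Ideal.sum_mem _ ?_
      intro m hm
      by_cases hPm : Pm m
      · exfalso
        have hmS : m ∈ S := (hSmem m).mpr ⟨mem_V_deg x.2 m hm, hPm⟩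
        exact MvPolynomial.mem_support_iff.mp hm (hcoeff ⟨m, hmS⟩)
      · exact monomial_mem_of_Gle ((not_Pm_iff m).mp hPm) _
    · intro hid
      funext s
      rw [hφ_apply x s]
      by_contra hc
      have hsupp : (s : Fin 9 →₀ ℕ) ∈ (x : MvPolynomial (Fin 9) ℂ).support :=
        MvPolynomial.mem_support_iff.mpr hc
      have hgle := support_Gle hid _ hsupp
      have hPm : Pm (s : Fin 9 →₀ ℕ) := ((hSmem _).mp s.2).2
      exact (not_Pm_iff _).mpr hgle hPm
  have hsurj : Function.Surjective φ := by
    intro v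
    have hpV : (∑ s ∈ S.attach, (v s) • (monomial (s : Fin 9 →₀ ℕ) (1:ℂ))) ∈ V := by
      refine Submodule.sum_mem _ ?_
      intro s _
      refine Submodule.smul_mem _ _ ?_
      rw [hV, mem_homogeneousSubmodule]
      refine isHomogeneous_monomial 1 ?_
      rw [degree_eq_sum_univ]
      exact ((hSmem _).mp s.2).1
    refine ⟨⟨_, hpV⟩, ?_⟩
    funext t
    rw [hφ_apply]
    have hterm : ∀ s ∈ S.attach,
        coeff (t : Fin 9 →₀ ℕ) ((v s) • (monomial (s : Fin 9 →₀ ℕ) (1:ℂ)))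
          = if s = t then v s else 0 := by
      intro s _
      rw [coeff_smul, coeff_monomial]
      by_cases h : s = t
      · rw [if_pos h, if_pos (by rw [h]), smul_eq_mul, mul_one]
      · rw [if_neg h, if_neg (fun hc => h (Subtype.ext hc)), smul_eq_mul, mul_zero]
    show coeff (t : Fin 9 →₀ ℕ) (∑ s ∈ S.attach, (v s) • (monomial (s : Fin 9 →₀ ℕ) (1:ℂ))) = v t
    rw [MvPolynomial.coeff_sum, Finset.sum_congr rfl hterm,
      Finset.sum_ite_eq' S.attach t (fun s => v s), if_pos (Finset.mem_attach _ _)]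
  have e : (V ⧸ K) ≃ₗ[ℂ] (↥S → ℂ) :=
    (Submodule.quotEquivOfEq K (LinearMap.ker φ) hker.symm).trans
      (φ.quotKerEquivOfSurjective hsurj)
  rw [e.finrank_eq, Module.finrank_fintype_fun_eq_card, Fintype.card_coe]
  exact count_standard n hn
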